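/- Let c > b > a ≥ 2 be pairwise coprime, ℓ = c·b⁻¹ mod a with ℓ > ⌊c/b⌋, q = ⌊a/(a-ℓ)⌋, r = a - q(a-ℓ). Suppose br < cq and set λ = ⌊(cq - br)/(b(a-ℓ) + c)⌋. Then g(a,b,c) + a = b((λ+1)(a-ℓ) + r - 1) if λ ≥ (c(q-1) - br)/(b(a-ℓ)+c), and g(a,b,c) + a = b(a-ℓ-1) + c(q-λ-1) if λ ≤ (c(q-1) - br)/(b(a-ℓ)+c). -/

import Mathlib

lemma frob_key1 (b c d q r lam Z w : ℤ)
    (hb : 0 < b) (hc : 0 < c) (hd : 0 < d)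
    (hr0 : 0 ≤ r)
    (hcqbr : 0 ≤ c * q - b * r)
    (hlam1 : lam * (b * d + c) ≤ c * q - b * r)
    (hw : 0 ≤ w) (hZ0 : 0 ≤ Z)
    (hwa : w * (q * d + r) ≤ (lam + 1) * d + r - 1 + d * Z) :
    w * (q * d + r) * b ≤ Z * (b * d + c) := by
  rcases eq_or_lt_of_le hw with h0 | h1
  · have : w = 0 := h0.symm
    subst this
    have : 0 ≤ Z * (b * d + c) := mul_nonneg hZ0 (by nlinarith)
    linarith
  · have h1 : 1 ≤ w := h1
    have hstep : 1 ≤ Z + lam + 1 - w * q := by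
      nlinarith [mul_nonneg (sub_nonneg.2 h1) hr0]
    have h2 : 0 ≤ (Z - (w * q - lam)) * (b * d + c) := by
      apply mul_nonneg
      · linarith
      · nlinarith
    have h1' : 0 ≤ (w - 1) * (c * q - b * r) :=
      mul_nonneg (by linarith) hcqbr
    nlinarith [h2, h1', hlam1]

lemma frob_min1 (a b c d q r lam Y Z : ℕ)
    (hb : 0 < b) (hc : 0 < c) (hd0 : 0 < d) (ha0 : 0 < a)
    (haqd : a = q * d + r)
    (hbr : b * r ≤ c * q)
    (hlam1 : lam * (b * d + c) + b * r ≤ c * q)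
    (hmod : Y ≡ (lam + 1) * d + r - 1 + d * Z [MOD a]) :
    b * ((lam + 1) * d + r - 1) ≤ b * Y + c * Z := by
  have h1 : 1 ≤ (lam + 1) * d + r := by
    have : 1 * 1 ≤ (lam + 1) * d := Nat.mul_le_mul (by omega) hd0
    omega
  set s := (lam + 1) * d + r - 1 with hs
  set T := s + d * Z with hT
  have hYge : T % a ≤ Y := by
    calc T % a = Y % a := hmod.symm
    _ ≤ Y := Nat.mod_le Y a
  have hdm := Nat.div_add_mod T a
  set w := T / a with hw
  have hsz : (s : ℤ) = ((lam : ℤ) + 1) * d + r - 1 := by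
    rw [hs]; push_cast [h1]; ring
  have haz : (a : ℤ) = q * d + r := by exact_mod_cast haqd
  have hlam1z : (lam : ℤ) * (b * d + c) ≤ c * q - b * r := by
    zify at hlam1; linarith
  have hcqbrz : (0 : ℤ) ≤ (c : ℤ) * q - b * r := by
    zify at hbr; linarith
  have hTz : (T : ℤ) = (s : ℤ) + d * Z := by rw [hT]; push_cast; ring
  have hwa : (w : ℤ) * ((q : ℤ) * d + r) ≤ ((lam : ℤ) + 1) * d + r - 1 + d * Z := by
    have h3 : a * w ≤ T := by omega
    have h3z : (a : ℤ) * w ≤ (T : ℤ) := by exact_mod_cast h3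
    rw [haz] at h3z
    rw [hTz, hsz] at h3z
    linarith
  have key := frob_key1 (b : ℤ) c d q r lam Z w
    (by exact_mod_cast hb) (by exact_mod_cast hc) (by exact_mod_cast hd0)
    (by positivity) hcqbrz hlam1z (by positivity) (by positivity) hwa
  have e1 : ((T % a : ℕ) : ℤ) = (s : ℤ) + d * Z - ((q : ℤ) * d + r) * w := by
    have h4 : (a : ℤ) * w + ((T % a : ℕ) : ℤ) = (T : ℤ) := by exact_mod_cast hdm
    rw [haz] at h4
    linarith
  have hYz : ((T % a : ℕ) : ℤ) ≤ (Y : ℤ) := by exact_mod_cast hYge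
  have final : (b : ℤ) * s ≤ (b : ℤ) * Y + c * Z := by
    have hbY : (b : ℤ) * ((T % a : ℕ) : ℤ) ≤ (b : ℤ) * Y :=
      mul_le_mul_of_nonneg_left hYz (by positivity)
    rw [e1] at hbY
    linarith [key]
  exact_mod_cast final

lemma frob_key2 (b c d q r lam Z w : ℤ)
    (hb : 0 < b) (hc : 0 < c) (hd : 0 < d)
    (hr0 : 0 ≤ r)
    (hcqbr : 0 ≤ c * q - b * r)
    (h1 : 1 ≤ w) (hZ0 : 0 ≤ Z)
    (hwa : w * (q * d + r) ≤ (lam + 2) * d + r - 1 + d * Z) :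
    b * (d - 1) + c * (q - lam - 1)
      ≤ b * ((lam + 2) * d + r - 1) + (Z * (b * d + c) - w * (q * d + r) * b) := by
  have hstep : 1 ≤ Z + lam + 2 - w * q := by
    nlinarith [mul_nonneg (sub_nonneg.2 h1) hr0]
  have h2 : 0 ≤ (Z - (w * q - lam - 1)) * (b * d + c) := by
    apply mul_nonneg
    · linarith
    · nlinarith
  have h1' : 0 ≤ (w - 1) * (c * q - b * r) :=
    mul_nonneg (by linarith) hcqbr
  nlinarith [h2, h1']

lemma frob_min2 (a b c d q r lam Y Z : ℕ)
    (hb : 0 < b) (hc : 0 < c) (hd0 : 0 < d) (ha0 : 0 < a)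
    (haqd : a = q * d + r)
    (hbr : b * r ≤ c * q)
    (hlam2 : c * q < (lam + 1) * (b * d + c) + b * r)
    (hq2 : lam + 2 ≤ q)
    (hmod : Y ≡ (lam + 2) * d + r - 1 + d * Z [MOD a]) :
    b * (d - 1) + c * (q - lam - 1) ≤ b * Y + c * Z := by
  have h1 : 1 ≤ (lam + 2) * d + r := by
    have : 1 * 1 ≤ (lam + 2) * d := Nat.mul_le_mul (by omega) hd0
    omega
  set s := (lam + 2) * d + r - 1 with hs
  set T := s + d * Z with hT
  have hYge : T % a ≤ Y := by
    calc T % a = Y % a := hmod.symm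
    _ ≤ Y := Nat.mod_le Y a
  have hdm := Nat.div_add_mod T a
  set w := T / a with hw
  have hsz : (s : ℤ) = ((lam : ℤ) + 2) * d + r - 1 := by
    rw [hs]; push_cast [h1]; ring
  have haz : (a : ℤ) = q * d + r := by exact_mod_cast haqd
  have hlam2z : (c : ℤ) * q < ((lam : ℤ) + 1) * (b * d + c) + b * r := by
    exact_mod_cast hlam2
  have hcqbrz : (0 : ℤ) ≤ (c : ℤ) * q - b * r := by
    zify at hbr; linarith
  have hTz : (T : ℤ) = (s : ℤ) + d * Z := by rw [hT]; push_cast; ring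
  have e1 : ((T % a : ℕ) : ℤ) = (s : ℤ) + d * Z - ((q : ℤ) * d + r) * w := by
    have h4 : (a : ℤ) * w + ((T % a : ℕ) : ℤ) = (T : ℤ) := by exact_mod_cast hdm
    rw [haz] at h4
    linarith
  have hYz : ((T % a : ℕ) : ℤ) ≤ (Y : ℤ) := by exact_mod_cast hYge
  have hbY : (b : ℤ) * ((s : ℤ) + d * Z - ((q : ℤ) * d + r) * w) ≤ (b : ℤ) * Y := by
    rw [← e1]
    exact mul_le_mul_of_nonneg_left hYz (by positivity)
  have final : (b : ℤ) * (d - 1) + c * ((q : ℤ) - lam - 1) ≤ (b : ℤ) * Y + c * Z := by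
    rcases Nat.eq_zero_or_pos w with h0 | h1
    · -- w = 0 : value ≥ b*s + Z*(bd+c) ≥ target
      have hw0 : (w : ℤ) = 0 := by exact_mod_cast h0
      rw [hw0] at hbY
      have hZnn : (0:ℤ) ≤ (Z:ℤ) * ((b:ℤ) * d + c) := by positivity
      rw [hsz] at hbY
      linarith [hbY, hZnn, hlam2z]
    · have h1z : (1 : ℤ) ≤ w := by exact_mod_cast h1
      have hwa : (w : ℤ) * ((q : ℤ) * d + r) ≤ ((lam : ℤ) + 2) * d + r - 1 + d * Z := by
        have h3 : a * w ≤ T := by omega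
        have h3z : (a : ℤ) * w ≤ (T : ℤ) := by exact_mod_cast h3
        rw [haz] at h3z
        rw [hTz, hsz] at h3z
        linarith
      have key := frob_key2 (b : ℤ) c d q r lam Z w
        (by exact_mod_cast hb) (by exact_mod_cast hc) (by exact_mod_cast hd0)
        (by positivity) hcqbrz h1z (by positivity) hwa
      rw [hsz] at hbY
      linarith [key, hbY]
  have hd1 : 1 ≤ d := hd0
  have hq1 : lam + 1 ≤ q := by omega
  have goalz : ((b * (d - 1) + c * (q - lam - 1) : ℕ) : ℤ) ≤ ((b * Y + c * Z : ℕ) : ℤ) := by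
    push_cast [Nat.cast_sub hd1, Nat.cast_sub (by omega : lam ≤ q),
      Nat.cast_sub (by omega : 1 ≤ q - lam)]
    linarith [final]
  exact_mod_cast goalz

lemma frob_cover (a b c d q r lam : ℕ)
    (hb : 0 < b) (hc : 0 < c) (hd0 : 0 < d) (ha0 : 0 < a)
    (haqd : a = q * d + r) (hrd : r < d)
    (hlamq : lam + 1 ≤ q)
    (hdvd : (a : ℤ) ∣ (b : ℤ) * d + c)
    (s : ℕ) (hs : s < a) :
    ∃ y z : ℕ, (b * y + c * z) ≡ b * s [MOD a] ∧
      b * y + c * z ≤ max (b * ((lam + 1) * d + r - 1)) (b * (d - 1) + c * (q - lam - 1)) := by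
  by_cases hcase : s < (lam + 1) * d + r
  · refine ⟨s, 0, by simp [Nat.ModEq], ?_⟩
    have : b * s ≤ b * ((lam + 1) * d + r - 1) := Nat.mul_le_mul_left b (by omega)
    simp only [Nat.mul_zero, Nat.add_zero]
    exact le_trans this (le_max_left _ _)
  · push_neg at hcase
    set m := a - s with hm
    have hm1 : 1 ≤ m := by omega
    set z := (m + d - 1) / d with hz
    have hdm := Nat.div_add_mod (m + d - 1) d
    have hmod_lt : (m + d - 1) % d < d := Nat.mod_lt _ hd0
    set P := d * z with hP
    have hPub : P ≤ m + d - 1 := by omega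
    have hPlb : m ≤ P := by omega
    have hz1 : 1 ≤ z := by
      rcases Nat.eq_zero_or_pos z with h0 | h1
      · rw [h0] at hP; simp at hP; omega
      · exact h1
    set u := q - lam - 1 with hu
    have hqd : q * d = (lam + 1) * d + u * d := by
      rw [show q = lam + 1 + u by omega]; ring
    have hzu : z ≤ u := by
      by_contra hcon
      push_neg at hcon
      have : d * (u + 1) ≤ d * z := Nat.mul_le_mul_left d hcon
      have hud : d * (u + 1) = u * d + d := by ring
      omega
    have hy : a ≤ s + P := by omega
    have hyd : s + P - a ≤ d - 1 := by omega
    refine ⟨s + P - a, z, ?_, ?_⟩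
    · rw [Nat.ModEq.comm (n := a)]
      apply (Nat.modEq_iff_dvd).mpr
      have hcast : ((b * (s + P - a) + c * z : ℕ) : ℤ) - ((b * s : ℕ) : ℤ)
          = (z : ℤ) * ((b : ℤ) * d + c) - (a : ℤ) * b := by
        push_cast [hP, Nat.cast_sub (show a ≤ s + d * z by omega)]
        ring
      rw [hcast]
      exact dvd_sub (Dvd.dvd.mul_left hdvd z) (Dvd.intro _ rfl)
    · have h1 : b * (s + P - a) ≤ b * (d - 1) := Nat.mul_le_mul_left b hyd
      have h2 : c * z ≤ c * u := Nat.mul_le_mul_left c hzu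
      exact le_trans (by omega) (le_max_right _ _)

lemma frob_reach (a b n : ℕ) (ha0 : 0 < a) (cab : Nat.Coprime a b) :
    ∃ s, s < a ∧ b * s ≡ n [MOD a] := by
  haveI : NeZero a := ⟨by omega⟩
  set x : ZMod a := (n : ZMod a) * (b : ZMod a)⁻¹ with hx
  refine ⟨x.val, ZMod.val_lt x, ?_⟩
  have h1 : ((b * x.val : ℕ) : ZMod a) = (n : ZMod a) := by
    push_cast
    rw [ZMod.natCast_rightInverse x, hx, mul_comm ((n : ZMod a)) ((b : ZMod a))⁻¹,
      ← mul_assoc, ZMod.coe_mul_inv_eq_one b cab.symm, one_mul]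
  exact (ZMod.natCast_eq_natCast_iff _ _ _).1 h1


/-- Theorem 3: the case `ℓ > k` and `br < cq`. -/
theorem frobenius_br_lt_cq (a b c ℓ q r lam g : ℕ)
    (ha : 2 ≤ a) (hab : a < b) (hbc : b < c)
    (cab : Nat.Coprime a b) (cac : Nat.Coprime a c) (cbc : Nat.Coprime b c)
    (hℓa : ℓ < a) (hℓ : b * ℓ % a = c % a)
    (hk : c / b < ℓ)
    (hq : q = a / (a - ℓ)) (hr : r = a - q * (a - ℓ))
    (hbr : b * r < c * q)
    (hlam : lam = (c * q - b * r) / (b * (a - ℓ) + c))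
    (hg : IsGreatest {n : ℕ | 0 < n ∧ ¬ ∃ x y z : ℕ, n = a * x + b * y + c * z} g) :
    (((c : ℚ) * ((q : ℚ) - 1) - (b : ℚ) * (r : ℚ)) / ((b : ℚ) * ((a - ℓ : ℕ) : ℚ) + (c : ℚ))
        ≤ (lam : ℚ) →
      g + a = b * ((lam + 1) * (a - ℓ) + r - 1))
    ∧ ((lam : ℚ) ≤
        ((c : ℚ) * ((q : ℚ) - 1) - (b : ℚ) * (r : ℚ)) / ((b : ℚ) * ((a - ℓ : ℕ) : ℚ) + (c : ℚ)) →
      g + a = b * (a - ℓ - 1) + c * (q - lam - 1)) := by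
  set d := a - ℓ with hd_def
  have ha0 : 0 < a := by omega
  have hb0 : 0 < b := by omega
  have hc0 : 0 < c := by omega
  have hd0 : 0 < d := by omega
  have hℓ1 : 1 ≤ ℓ := by
    have : 1 ≤ c / b := (Nat.one_le_div_iff hb0).2 (by omega)
    omega
  have hda : d < a := by omega
  -- a = q*d + r, r < d
  have hqd_le : q * d ≤ a := by rw [hq]; exact Nat.div_mul_le_self a d
  have haqd : a = q * d + r := by
    rw [hr]; omega
  have hqdc : q * d = d * (a / d) := by rw [hq]; ring
  have hrd : r < d := by
    have h1 := Nat.div_add_mod a d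
    have h2 : a % d < d := Nat.mod_lt _ hd0
    rw [hr]
    omega
  have hq1 : 1 ≤ q := by
    rw [hq]; exact (Nat.one_le_div_iff hd0).2 (by omega)
  -- divisibility : a ∣ b*d + c over ℤ
  have hdz : (d : ℤ) = (a : ℤ) - ℓ := by omega
  have hdvd : (a : ℤ) ∣ (b : ℤ) * d + c := by
    have h1 : (b * ℓ) ≡ c [MOD a] := hℓ
    have h2 : (a : ℤ) ∣ (c : ℤ) - (b * ℓ : ℕ) := (Nat.modEq_iff_dvd).mp h1
    have h3 : (b : ℤ) * d + c = (b : ℤ) * a + ((c : ℤ) - (b * ℓ : ℕ)) := by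
      push_cast; rw [hdz]; ring
    rw [h3]
    exact dvd_add (dvd_mul_left (a:ℤ) (b:ℤ)) h2
  -- lam bounds
  have hbr' : b * r ≤ c * q := hbr.le
  obtain ⟨kk, hkk1, hkk2⟩ : ∃ kk, c * q - b * r = (b * d + c) * lam + kk ∧ kk < b * d + c := by
    refine ⟨(c * q - b * r) % (b * d + c), ?_, Nat.mod_lt _ (Nat.lt_of_lt_of_le hc0 (Nat.le_add_left c _))⟩
    rw [hlam]
    exact (Nat.div_add_mod _ _).symm
  have hlamle : lam * (b * d + c) + b * r ≤ c * q := by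
    have : (b * d + c) * lam ≤ c * q - b * r := by omega
    calc lam * (b * d + c) + b * r = (b * d + c) * lam + b * r := by ring
    _ ≤ (c * q - b * r) + b * r := by omega
    _ = c * q := by omega
  have hlamlt : c * q < (lam + 1) * (b * d + c) + b * r := by
    have h4 : c * q - b * r < (b * d + c) * lam + (b * d + c) := by omega
    have h5 : (lam + 1) * (b * d + c) = (b * d + c) * lam + (b * d + c) := by ring
    omega
  -- lam + 1 ≤ q
  have hlamq : lam + 1 ≤ q := by
    by_contra hcon
    push_neg at hcon
    have h6 : q * (b * d + c) ≤ lam * (b * d + c) := Nat.mul_le_mul_right _ (by omega)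
    have h7 : q * (b * d + c) = q * (b * d) + c * q := by ring
    have h8 : 1 * 1 ≤ q * (b * d) := Nat.mul_le_mul hq1 (Nat.mul_pos hb0 hd0)
    omega
  -- the two target values
  set N1 := b * ((lam + 1) * d + r - 1) with hN1
  set N2 := b * (d - 1) + c * (q - lam - 1) with hN2
  have haz : (a : ℤ) = (q : ℤ) * d + r := by exact_mod_cast haqd
  have hcop : IsCoprime (a : ℤ) (b : ℤ) := by
    rw [Int.isCoprime_iff_gcd_eq_one]; exact_mod_cast cab
  -- upper bound for all gaps
  have hup : ∀ n : ℕ, 0 < n → (¬ ∃ x y z : ℕ, n = a * x + b * y + c * z) →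
      n + a ≤ max N1 N2 := by
    intro n hn hnr
    obtain ⟨s, hs, hbs⟩ := frob_reach a b n ha0 cab
    obtain ⟨y, z, hmod, hle⟩ :=
      frob_cover a b c d q r lam hb0 hc0 hd0 ha0 haqd hrd hlamq hdvd s hs
    have hcomb : b * y + c * z ≡ n [MOD a] := hmod.trans hbs
    by_cases hvn : b * y + c * z ≤ n
    · exfalso
      obtain ⟨x, hx⟩ := (Nat.modEq_iff_dvd' hvn).mp hcomb
      exact hnr ⟨x, y, z, by omega⟩
    · push_neg at hvn
      obtain ⟨x, hx⟩ := (Nat.modEq_iff_dvd' hvn.le).mp hcomb.symm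
      have hxa : a ≤ b * y + c * z - n := by
        rw [hx]
        rcases Nat.eq_zero_or_pos x with h0 | h1
        · rw [h0] at hx; omega
        · calc a = a * 1 := by ring
          _ ≤ a * x := Nat.mul_le_mul_left a h1
      have h10 : n + a ≤ b * y + c * z := by omega
      exact le_trans h10 hle
  -- positivity helper
  have hs1 : 1 ≤ (lam + 1) * d + r := by
    have : 1 * 1 ≤ (lam + 1) * d := Nat.mul_le_mul (by omega) hd0
    omega
  constructor
  · -- Case 1
    intro hcond
    have hDq : (0 : ℚ) < (b : ℚ) * (d : ℚ) + c := by positivity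
    rw [div_le_iff₀ hDq] at hcond
    have hc1 : (c : ℤ) * ((q : ℤ) - 1) - b * r ≤ (lam : ℤ) * ((b : ℤ) * d + c) := by
      exact_mod_cast hcond
    have hs2 : 2 ≤ (lam + 1) * d + r := by
      by_contra hcon
      push_neg at hcon
      have hX : 1 * 1 ≤ (lam + 1) * d := Nat.mul_le_mul (by omega) hd0
      have he1 : (lam + 1) * d = 1 := by omega
      have he2 : r = 0 := by omega
      have hdle : d ≤ 1 := Nat.le_of_dvd one_pos ⟨lam + 1, by linarith [he1]⟩
      have hd1 : d = 1 := by omega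
      have hlam0 : lam = 0 := by
        rw [hd1, mul_one] at he1; omega
      have hqa : a = q := by rw [haqd, hd1, he2]; ring
      have h11 : c * 2 ≤ c * q := Nat.mul_le_mul_left c (by omega)
      rw [hlam0, hd1, he2] at hlamlt
      simp at hlamlt
      omega
    have hmaxN : N2 ≤ N1 := by
      rw [hN1, hN2]
      zify [hs1, hd0, show lam ≤ q by omega, show 1 ≤ q - lam by omega]
      linarith [hc1]
    have hN1a : a < N1 := by
      rw [hN1]
      calc a < b := hab
      _ = b * 1 := (mul_one b).symm
      _ ≤ b * ((lam + 1) * d + r - 1) := Nat.mul_le_mul_left b (by omega)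
    have hnr1 : ¬ ∃ x y z : ℕ, N1 - a = a * x + b * y + c * z := by
      rintro ⟨x, y, z, heq⟩
      have heqz : (N1 : ℤ) - a = a * x + b * y + c * z := by
        zify [hN1a.le] at heq; exact_mod_cast heq
      have hSZ : (((lam + 1) * d + r - 1 : ℕ) : ℤ) = ((lam : ℤ) + 1) * d + r - 1 := by
        rw [Nat.cast_sub hs1]; push_cast; ring
      have hN1z : (N1 : ℤ) = b * (((lam + 1) * d + r - 1 : ℕ) : ℤ) := by
        rw [hN1]; push_cast; ring
      have h9 : (b : ℤ) * ((((lam + 1) * d + r - 1 : ℕ) : ℤ) + (d : ℤ) * z - y)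
          = a * (x + 1) + z * ((b : ℤ) * d + c) := by
        linear_combination heqz - hN1z
      have hdvd1 : (a : ℤ) ∣ (b : ℤ) * ((((lam + 1) * d + r - 1 : ℕ) : ℤ) + (d : ℤ) * z - y) := by
        rw [h9]
        exact dvd_add (dvd_mul_right _ _) (hdvd.mul_left z)
      have hdvd2 : (a : ℤ) ∣ ((((lam + 1) * d + r - 1 : ℕ) : ℤ) + (d : ℤ) * z - y) :=
        hcop.dvd_of_dvd_mul_left hdvd1
      have hmod1 : y ≡ (lam + 1) * d + r - 1 + d * z [MOD a] := by
        apply (Nat.modEq_iff_dvd).mpr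
        have h13 : (((lam + 1) * d + r - 1 + d * z : ℕ) : ℤ) - (y : ℤ)
            = (((lam + 1) * d + r - 1 : ℕ) : ℤ) + (d : ℤ) * z - y := by
          push_cast; ring
        rw [h13]; exact hdvd2
      have hmin := frob_min1 a b c d q r lam y z hb0 hc0 hd0 ha0 haqd hbr' hlamle hmod1
      omega
    have hmem : N1 - a ∈ {n : ℕ | 0 < n ∧ ¬ ∃ x y z : ℕ, n = a * x + b * y + c * z} :=
      ⟨by omega, hnr1⟩
    have hle1 : N1 - a ≤ g := hg.2 hmem
    obtain ⟨hg1, hg2⟩ := hg.1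
    have hub : g + a ≤ N1 := by
      have h14 := hup g hg1 hg2
      rwa [max_eq_left hmaxN] at h14
    omega
  · -- Case 2
    intro hcond
    have hDq : (0 : ℚ) < (b : ℚ) * (d : ℚ) + c := by positivity
    rw [le_div_iff₀ hDq] at hcond
    have hc2 : (lam : ℤ) * ((b : ℤ) * d + c) ≤ (c : ℤ) * ((q : ℤ) - 1) - b * r := by
      exact_mod_cast hcond
    have hq2 : lam + 2 ≤ q := by
      rcases Nat.lt_or_ge (lam + 1) q with h | h
      · omega
      · exfalso
        have hqe : (q : ℤ) = (lam : ℤ) + 1 := by exact_mod_cast (by omega : q = lam + 1)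
        rw [hqe] at hc2
        have h15 : (lam : ℤ) * ((b : ℤ) * d) + b * r ≤ 0 := by linarith [hc2]
        have h16 : (0 : ℤ) ≤ (lam : ℤ) * ((b : ℤ) * d) := by positivity
        have h17 : (0 : ℤ) ≤ (b : ℤ) * r := by positivity
        have h19 : (lam : ℤ) * ((b : ℤ) * d) = 0 := le_antisymm (by linarith) h16
        have h20 : (b : ℤ) * r = 0 := le_antisymm (by linarith) h17
        have h19n : lam * (b * d) = 0 := by exact_mod_cast h19
        have h20n : b * r = 0 := by exact_mod_cast h20
        have hr0 : r = 0 := by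
          rcases Nat.mul_eq_zero.mp h20n with h2 | h2
          · omega
          · exact h2
        have hlam0 : lam = 0 := by
          rcases Nat.mul_eq_zero.mp h19n with h2 | h2
          · exact h2
          · exact absurd h2 (Nat.mul_pos hb0 hd0).ne'
        have hqe1 : q = 1 := by omega
        rw [hqe1, hr0] at haqd
        simp at haqd
        omega
    have hmaxN : N1 ≤ N2 := by
      rw [hN1, hN2]
      zify [hs1, hd0, show lam ≤ q by omega, show 1 ≤ q - lam by omega]
      linarith [hc2]
    have haN2 : a < N2 := by
      have h21 : c * 1 ≤ c * (q - lam - 1) := Nat.mul_le_mul_left c (by omega)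
      omega
    have hσ1 : 1 ≤ (lam + 2) * d + r := by
      have : 1 * 1 ≤ (lam + 2) * d := Nat.mul_le_mul (by omega) hd0
      omega
    have hσz : (((lam + 2) * d + r - 1 : ℕ) : ℤ) = ((lam : ℤ) + 2) * d + r - 1 := by
      rw [Nat.cast_sub hσ1]; push_cast; ring
    have hN2z : (N2 : ℤ) = (b : ℤ) * ((d : ℤ) - 1) + c * ((q : ℤ) - lam - 1) := by
      rw [hN2]
      push_cast [Nat.cast_sub hd0, Nat.cast_sub (show lam ≤ q by omega),
        Nat.cast_sub (show 1 ≤ q - lam by omega)]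
      ring
    have hNσdvd : (a : ℤ) ∣ (b : ℤ) * (((lam + 2) * d + r - 1 : ℕ) : ℤ) - (N2 : ℤ) := by
      have hkey : (b : ℤ) * (((lam + 2) * d + r - 1 : ℕ) : ℤ) - (N2 : ℤ)
          = ((lam : ℤ) + 1 - q) * ((b : ℤ) * d + c) + (a : ℤ) * b := by
        rw [hσz, hN2z, haz]; ring
      rw [hkey]
      exact dvd_add (hdvd.mul_left _) (dvd_mul_right _ _)
    have hnr2 : ¬ ∃ x y z : ℕ, N2 - a = a * x + b * y + c * z := by
      rintro ⟨x, y, z, heq⟩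
      have heqz : (N2 : ℤ) - a = a * x + b * y + c * z := by
        zify [haN2.le] at heq; exact_mod_cast heq
      have h9 : (b : ℤ) * ((((lam + 2) * d + r - 1 : ℕ) : ℤ) + (d : ℤ) * z - y)
          = ((b : ℤ) * (((lam + 2) * d + r - 1 : ℕ) : ℤ) - (N2 : ℤ))
            + a * (x + 1) + z * ((b : ℤ) * d + c) := by
        linear_combination heqz
      have hdvd1 : (a : ℤ) ∣ (b : ℤ) * ((((lam + 2) * d + r - 1 : ℕ) : ℤ) + (d : ℤ) * z - y) := by
        rw [h9]
        exact dvd_add (dvd_add hNσdvd (dvd_mul_right _ _)) (hdvd.mul_left z)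
      have hdvd2 : (a : ℤ) ∣ ((((lam + 2) * d + r - 1 : ℕ) : ℤ) + (d : ℤ) * z - y) :=
        hcop.dvd_of_dvd_mul_left hdvd1
      have hmod2 : y ≡ (lam + 2) * d + r - 1 + d * z [MOD a] := by
        apply (Nat.modEq_iff_dvd).mpr
        have h13 : (((lam + 2) * d + r - 1 + d * z : ℕ) : ℤ) - (y : ℤ)
            = (((lam + 2) * d + r - 1 : ℕ) : ℤ) + (d : ℤ) * z - y := by
          push_cast; ring
        rw [h13]; exact hdvd2
      have hmin := frob_min2 a b c d q r lam y z hb0 hc0 hd0 ha0 haqd hbr' hlamlt hq2 hmod2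
      omega
    have hmem : N2 - a ∈ {n : ℕ | 0 < n ∧ ¬ ∃ x y z : ℕ, n = a * x + b * y + c * z} :=
      ⟨by omega, hnr2⟩
    have hle1 : N2 - a ≤ g := hg.2 hmem
    obtain ⟨hg1, hg2⟩ := hg.1
    have hub : g + a ≤ N2 := by
      have h14 := hup g hg1 hg2
      rwa [max_eq_right hmaxN] at h14
    omega
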